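/- arXiv:2109.06829 — 2 statements merged into one kernel-verified Lean document; each statement's English description precedes it below -/
import Mathlib

section
/- For every even positive integer ℓ and every real number t, the truncated exponential E_ℓ(t) = Σ_{j ≤ ℓ} t^j / j! is strictly positive. Moreover, if t ≤ ℓ/e², then e^t ≤ (1 + e^{-ℓ}) · E_ℓ(t). -/
open Finset

noncomputable def Etr (n : ℕ) (t : ℝ) : ℝ := ∑ j ∈ Finset.range (n + 1), t ^ j / (Nat.factorial j)

lemma Etr_zero (n : ℕ) : Etr n 0 = 1 := by
  simp [Etr, Finset.sum_range_succ']

lemma Etr_hasDeriv (n : ℕ) (t : ℝ) : HasDerivAt (Etr (n+1)) (Etr n t) t := by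
  have h : HasDerivAt (fun t : ℝ => ∑ j ∈ Finset.range (n + 2), t ^ j / (Nat.factorial j))
      (∑ j ∈ Finset.range (n + 2), ((j : ℝ) * t ^ (j-1) / (Nat.factorial j))) t := by
    apply HasDerivAt.fun_sum
    intro j _
    exact (hasDerivAt_pow j t).div_const _
  convert h using 1
  · rfl
  rw [Finset.sum_range_succ']
  simp only [Nat.cast_zero, zero_mul, zero_div, add_zero, Nat.add_sub_cancel]
  unfold Etr
  apply Finset.sum_congr rfl
  intro j _
  rw [Nat.factorial_succ]
  push_cast
  field_simp

lemma key (n : ℕ) : ∀ t ≤ (0:ℝ),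
    (Even n → Real.exp t ≤ Etr n t) ∧ (¬ Even n → Etr n t ≤ Real.exp t) := by
  induction n with
  | zero =>
    intro t ht
    refine ⟨fun _ => ?_, fun h => absurd Even.zero h⟩
    simpa [Etr] using Real.exp_le_one_iff.mpr ht
  | succ n ih =>
    have hderiv : ∀ x : ℝ, HasDerivAt (fun t => Real.exp t - Etr (n+1) t)
        (Real.exp x - Etr n x) x :=
      fun x => (Real.hasDerivAt_exp x).sub (Etr_hasDeriv n x)
    have hdiff : ∀ x : ℝ, DifferentiableAt ℝ (fun t => Real.exp t - Etr (n+1) t) x :=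
      fun x => (hderiv x).differentiableAt
    have hc : ContinuousOn (fun t => Real.exp t - Etr (n+1) t) (Set.Iic 0) :=
      fun x _ => (hdiff x).continuousAt.continuousWithinAt
    have h0 : Real.exp 0 - Etr (n+1) 0 = 0 := by simp [Etr_zero]
    intro t ht
    by_cases hn : Even n
    · have hanti : AntitoneOn (fun t => Real.exp t - Etr (n+1) t) (Set.Iic 0) := by
        apply antitoneOn_of_deriv_nonpos (convex_Iic 0) hc
        · exact fun x _ => (hdiff x).differentiableWithinAt
        · intro x hx
          rw [(hderiv x).deriv]
          have := ((ih x (le_of_lt (by simpa using hx))).1 hn)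
          linarith
      have := hanti (Set.mem_Iic.mpr ht) (Set.mem_Iic.mpr le_rfl) ht
      dsimp only at this
      rw [h0] at this
      exact ⟨fun he => ((Nat.even_add_one.mp he) hn).elim, fun _ => by linarith⟩
    · have hmono : MonotoneOn (fun t => Real.exp t - Etr (n+1) t) (Set.Iic 0) := by
        apply monotoneOn_of_deriv_nonneg (convex_Iic 0) hc
        · exact fun x _ => (hdiff x).differentiableWithinAt
        · intro x hx
          rw [(hderiv x).deriv]
          have := ((ih x (le_of_lt (by simpa using hx))).2 hn)
          linarith
      have := hmono (Set.mem_Iic.mpr ht) (Set.mem_Iic.mpr le_rfl) ht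
      dsimp only at this
      rw [h0] at this
      refine ⟨fun _ => by linarith, fun ho => ?_⟩
      exact absurd (Nat.even_add_one.mpr hn) ho

lemma exp_tsum (t : ℝ) : Real.exp t = ∑' n : ℕ, t ^ n / (Nat.factorial n) := by
  rw [Real.exp_eq_exp_ℝ, NormedSpace.exp_eq_tsum_div]

lemma tail_bound (ℓ : ℕ) (t : ℝ) (ht0 : 0 ≤ t) (ht : t ≤ (ℓ:ℝ)/Real.exp 2) :
    Real.exp t - Etr ℓ t ≤ Real.exp (-(ℓ:ℝ)) := by
  set f : ℕ → ℝ := fun n => t ^ n / (Nat.factorial n) with hf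
  have hsum : Summable f := Real.summable_pow_div_factorial t
  have hsplit : Real.exp t - Etr ℓ t = ∑' i, f (i + (ℓ+1)) := by
    rw [exp_tsum, ← Summable.sum_add_tsum_nat_add (ℓ+1) hsum]
    unfold Etr
    ring
  set r : ℝ := t / ((ℓ:ℝ)+1) with hrdef
  have hr0 : 0 ≤ r := by positivity
  have hre : r ≤ Real.exp (-2) := by
    rw [Real.exp_neg, hrdef, div_le_iff₀ (by positivity : (0:ℝ) < (ℓ:ℝ)+1)]
    rw [div_eq_mul_inv] at ht
    nlinarith [inv_nonneg.mpr (Real.exp_pos 2).le]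
  have hr1 : r < 1 := lt_of_le_of_lt hre (by
    rw [Real.exp_neg, inv_lt_one_iff₀]
    right
    nlinarith [Real.add_one_le_exp (2:ℝ)])
  have hfpos : (0:ℝ) < (Nat.factorial (ℓ+1) : ℝ) := by positivity
  have hterm : ∀ i : ℕ, f (i + (ℓ+1)) ≤ (t^(ℓ+1)/(Nat.factorial (ℓ+1) : ℝ)) * r ^ i := by
    intro i
    have h1 : Nat.factorial (ℓ+1) * (ℓ+1)^i ≤ Nat.factorial (ℓ+1) * (ℓ+2)^i :=
      Nat.mul_le_mul_left _ (Nat.pow_le_pow_left (by omega) i)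
    have h2 : Nat.factorial (ℓ+1) * (ℓ+2)^i ≤ Nat.factorial (ℓ+1+i) :=
      Nat.factorial_mul_pow_le_factorial
    have h3 : Nat.factorial (ℓ+1) * (ℓ+1)^i ≤ Nat.factorial (i + (ℓ+1)) := by
      rw [show i + (ℓ+1) = ℓ+1+i from by omega]; omega
    have hfact : ((Nat.factorial (ℓ+1)) : ℝ) * ((ℓ:ℝ)+1)^i
        ≤ ((Nat.factorial (i + (ℓ+1))) : ℝ) := by
      calc ((Nat.factorial (ℓ+1)) : ℝ) * ((ℓ:ℝ)+1)^i
          = ((Nat.factorial (ℓ+1) * (ℓ+1)^i : ℕ) : ℝ) := by push_cast; ring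
        _ ≤ _ := by exact_mod_cast h3
    calc f (i + (ℓ+1)) = t ^ (i + (ℓ+1)) / ((Nat.factorial (i + (ℓ+1))) : ℝ) := rfl
      _ ≤ t ^ (i + (ℓ+1)) / (((Nat.factorial (ℓ+1)) : ℝ) * ((ℓ:ℝ)+1)^i) := by
          gcongr
      _ = (t^(ℓ+1)/(Nat.factorial (ℓ+1) : ℝ)) * r ^ i := by
          rw [hrdef, div_pow, pow_add]
          field_simp
  have hsum1 : Summable (fun i => f (i + (ℓ+1))) := (summable_nat_add_iff (ℓ+1)).mpr hsum
  have hsum2 : Summable (fun i : ℕ => (t^(ℓ+1)/(Nat.factorial (ℓ+1) : ℝ)) * r ^ i) :=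
    (summable_geometric_of_lt_one hr0 hr1).mul_left _
  have hg : ∑' i, f (i + (ℓ+1)) ≤ (t^(ℓ+1)/(Nat.factorial (ℓ+1) : ℝ)) * (1 - r)⁻¹ := by
    calc ∑' i, f (i + (ℓ+1)) ≤ ∑' i : ℕ, (t^(ℓ+1)/(Nat.factorial (ℓ+1) : ℝ)) * r ^ i :=
          hsum1.tsum_le_tsum hterm hsum2
      _ = (t^(ℓ+1)/(Nat.factorial (ℓ+1) : ℝ)) * (1 - r)⁻¹ := by
          rw [tsum_mul_left, tsum_geometric_of_lt_one hr0 hr1]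
  have hfac : ((ℓ:ℝ)+1)^(ℓ+1) / ((Nat.factorial (ℓ+1)) : ℝ) ≤ Real.exp ((ℓ:ℝ)+1) := by
    have hs := Real.sum_le_exp_of_nonneg (x := ((ℓ:ℝ)+1)) (by positivity) (ℓ+2)
    have hone : ((ℓ:ℝ)+1)^(ℓ+1) / ((Nat.factorial (ℓ+1)) : ℝ)
        ≤ ∑ i ∈ Finset.range (ℓ+2), ((ℓ:ℝ)+1)^i / (Nat.factorial i : ℝ) :=
      Finset.single_le_sum (f := fun i => ((ℓ:ℝ)+1)^i / (Nat.factorial i : ℝ))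
        (fun i _ => by positivity) (Finset.self_mem_range_succ (ℓ+1))
    linarith
  have hA2 : t^(ℓ+1)/((Nat.factorial (ℓ+1)) : ℝ) ≤ Real.exp (-((ℓ:ℝ)+1)) := by
    have h1 : t^(ℓ+1) ≤ (((ℓ:ℝ)+1)/Real.exp 2)^(ℓ+1) := by
      apply pow_le_pow_left₀ ht0
      calc t ≤ (ℓ:ℝ)/Real.exp 2 := ht
        _ ≤ ((ℓ:ℝ)+1)/Real.exp 2 := by gcongr; linarith
    calc t^(ℓ+1)/((Nat.factorial (ℓ+1)) : ℝ)
        ≤ (((ℓ:ℝ)+1)/Real.exp 2)^(ℓ+1) / ((Nat.factorial (ℓ+1)) : ℝ) := by gcongr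
      _ = (((ℓ:ℝ)+1)^(ℓ+1) / ((Nat.factorial (ℓ+1)) : ℝ)) * ((Real.exp 2)^(ℓ+1))⁻¹ := by
          rw [div_pow]; ring
      _ ≤ Real.exp ((ℓ:ℝ)+1) * ((Real.exp 2)^(ℓ+1))⁻¹ := by gcongr
      _ = Real.exp (-((ℓ:ℝ)+1)) := by
          rw [← Real.exp_nat_mul, ← Real.exp_neg, ← Real.exp_add]
          congr 1
          push_cast
          ring
  have h2e : (2:ℝ) ≤ Real.exp 1 := by nlinarith [Real.add_one_le_exp (1:ℝ)]
  have h3e : (3:ℝ) ≤ Real.exp 2 := by nlinarith [Real.add_one_le_exp (2:ℝ)]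
  have hm1 : Real.exp (-1:ℝ) * Real.exp 1 = 1 := by rw [← Real.exp_add]; norm_num
  have hm2 : Real.exp (-2:ℝ) * Real.exp 2 = 1 := by rw [← Real.exp_add]; norm_num
  have he1 : Real.exp (-1:ℝ) ≤ 1/2 := by nlinarith [Real.exp_pos (-1:ℝ)]
  have he2 : Real.exp (-2:ℝ) ≤ 1/3 := by nlinarith [Real.exp_pos (-2:ℝ)]
  have hposr : (0:ℝ) < 1 - r := by linarith
  have hpos1 : (0:ℝ) < 1 - Real.exp (-2) := by linarith
  have hlast : Real.exp (-((ℓ:ℝ)+1)) * (1 - r)⁻¹ ≤ Real.exp (-(ℓ:ℝ)) := by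
    have hinv : (1 - r)⁻¹ ≤ (1 - Real.exp (-2))⁻¹ := by
      apply inv_anti₀ hpos1
      linarith
    have h9 : Real.exp (-1:ℝ) * (1 - Real.exp (-2))⁻¹ ≤ 1 := by
      have h10 : Real.exp (-1:ℝ) / (1 - Real.exp (-2)) ≤ 1 :=
        (div_le_one hpos1).mpr (by linarith)
      rwa [div_eq_mul_inv] at h10
    have hsplit2 : Real.exp (-((ℓ:ℝ)+1)) = Real.exp (-(ℓ:ℝ)) * Real.exp (-1:ℝ) := by
      rw [← Real.exp_add]; congr 1; ring
    calc Real.exp (-((ℓ:ℝ)+1)) * (1 - r)⁻¹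
        ≤ Real.exp (-((ℓ:ℝ)+1)) * (1 - Real.exp (-2))⁻¹ :=
          mul_le_mul_of_nonneg_left hinv (Real.exp_pos _).le
      _ = Real.exp (-(ℓ:ℝ)) * (Real.exp (-1:ℝ) * (1 - Real.exp (-2))⁻¹) := by
          rw [hsplit2]; ring
      _ ≤ Real.exp (-(ℓ:ℝ)) * 1 := mul_le_mul_of_nonneg_left h9 (Real.exp_pos _).le
      _ = Real.exp (-(ℓ:ℝ)) := mul_one _
  calc Real.exp t - Etr ℓ t = ∑' i, f (i + (ℓ+1)) := hsplit
    _ ≤ (t^(ℓ+1)/(Nat.factorial (ℓ+1) : ℝ)) * (1 - r)⁻¹ := hg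
    _ ≤ Real.exp (-((ℓ:ℝ)+1)) * (1 - r)⁻¹ :=
        mul_le_mul_of_nonneg_right hA2 (inv_nonneg.mpr hposr.le)
    _ ≤ Real.exp (-(ℓ:ℝ)) := hlast

/-- For every even positive integer `ℓ` and real `t`, the truncated exponential
`E_ℓ(t) = ∑_{j ≤ ℓ} t^j/j!` is strictly positive; moreover if `t ≤ ℓ/e²` then
`e^t ≤ (1 + e^{-ℓ}) E_ℓ(t)`. -/
theorem stmt2 (ℓ : ℕ) (hℓ : 0 < ℓ) (hev : Even ℓ) (t : ℝ) :
    0 < ∑ j ∈ Finset.range (ℓ + 1), t ^ j / (Nat.factorial j) ∧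
    (t ≤ (ℓ : ℝ) / Real.exp 2 →
      Real.exp t ≤ (1 + Real.exp (-(ℓ : ℝ))) *
        ∑ j ∈ Finset.range (ℓ + 1), t ^ j / (Nat.factorial j)) := by
  have hEeq : Etr ℓ t = ∑ j ∈ Finset.range (ℓ + 1), t ^ j / (Nat.factorial j) := rfl
  have hexpneg : (0:ℝ) < Real.exp (-(ℓ:ℝ)) := Real.exp_pos _
  have hone : 0 ≤ t → (1:ℝ) ≤ Etr ℓ t := by
    intro h
    have hs := Finset.single_le_sum (f := fun j => t ^ j / (Nat.factorial j : ℝ))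
      (fun i _ => by positivity) (Finset.mem_range.mpr (Nat.succ_pos ℓ))
    simpa [Etr] using hs
  have hpos : 0 < Etr ℓ t := by
    rcases le_or_gt 0 t with h | h
    · linarith [hone h]
    · have h1 := (key ℓ t h.le).1 hev
      linarith [Real.exp_pos t]
  rw [← hEeq]
  refine ⟨hpos, fun ht => ?_⟩
  rcases le_or_gt t 0 with h | h
  · have h1 := (key ℓ t h).1 hev
    nlinarith
  · have h0 := tail_bound ℓ t h.le ht
    have h1 := hone h.le
    nlinarith
end

section
/- Let I be a finite set of primes, a a real-valued completely multiplicative function, χ a completely multiplicative function taking values on the unit circle, ν as above, and k a nonzero real. Then for any even positive integer ℓ, the truncated exponential satisfies E_ℓ(2k·Re(P_I(χ;a))) = Σ_{n : p|n ⇒ p ∈ I, Ω(n) ≤ ℓ} k^{Ω(n)} a(n)/√n · (νχ ∗ ν·conj(χ))(n), where (νχ ∗ ν conj(χ))(n) = Σ_{de = n} ν(d)χ(d)ν(e)conj(χ(e)) and E_ℓ(t) = Σ_{j ≤ ℓ} t^j/j!. -/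
open scoped Classical

open ArithmeticFunction
open scoped ArithmeticFunction.Omega

/-- The multiplicative function `ν` with `ν(p^a) = 1/a!`. -/
noncomputable def nu (n : ℕ) : ℝ :=
  ∏ p ∈ n.primeFactors, (1 : ℝ) / (Nat.factorial (n.factorization p))

lemma cm_prod {M : Type*} [CommMonoid M] (h : ℕ → M) (h1 : h 1 = 1)
    (hm : ∀ m n, h (m * n) = h m * h n) {α : Type*} (s : Finset α) (f : α → ℕ) :
    h (∏ i ∈ s, f i) = ∏ i ∈ s, h (f i) := by
  classical
  induction s using Finset.cons_induction with
  | empty => simpa using h1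
  | cons i s hi ih => rw [Finset.prod_cons, hm, ih, Finset.prod_cons]

lemma cm_pow {M : Type*} [CommMonoid M] (h : ℕ → M) (h1 : h 1 = 1)
    (hm : ∀ m n, h (m * n) = h m * h n) (m e : ℕ) : h (m ^ e) = h m ^ e := by
  induction e with
  | zero => simpa using h1
  | succ e ih => rw [pow_succ, hm, ih, pow_succ]

lemma Omega_prod {α : Type*} (s : Finset α) (f : α → ℕ) (hf : ∀ i ∈ s, f i ≠ 0) :
    Ω (∏ i ∈ s, f i) = ∑ i ∈ s, Ω (f i) := by
  classical
  induction s using Finset.cons_induction with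
  | empty => simp
  | cons i s hi ih =>
      rw [Finset.prod_cons, Finset.sum_cons,
        cardFactors_mul (hf i (Finset.mem_cons_self i s))
          (Finset.prod_ne_zero_iff.2 fun j hj => hf j (Finset.mem_cons_of_mem hj)),
        ih fun j hj => hf j (Finset.mem_cons_of_mem hj)]

lemma fact_prod_pow (I : Finset ℕ) (hI : ∀ p ∈ I, p.Prime) (u : ℕ → ℕ) (q : ℕ) :
    (∏ p ∈ I, p ^ u p).factorization q = if q ∈ I then u q else 0 := by
  classical
  rw [Nat.factorization_prod (fun p hp => pow_ne_zero _ (hI p hp).pos.ne')]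
  rw [Finset.sum_apply']
  have : ∀ p ∈ I, ((p ^ u p).factorization) q
      = if p = q then u p else 0 := by
    intro p hp
    rw [Nat.factorization_pow, (hI p hp).factorization]
    simp [Finsupp.single_apply]
  rw [Finset.sum_congr rfl this, Finset.sum_ite_eq']

lemma Npos (I : Finset ℕ) (hI : ∀ p ∈ I, p.Prime) (u : ℕ → ℕ) :
    (∏ p ∈ I, p ^ u p) ≠ 0 :=
  Finset.prod_ne_zero_iff.2 fun p hp => pow_ne_zero _ (hI p hp).pos.ne'

lemma NprimeFactors (I : Finset ℕ) (hI : ∀ p ∈ I, p.Prime) (u : ℕ → ℕ) :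
    (∏ p ∈ I, p ^ u p).primeFactors ⊆ I := by
  intro q hq
  have h1 : (∏ p ∈ I, p ^ u p).factorization q ≠ 0 := by
    rw [← Nat.support_factorization] at hq
    exact Finsupp.mem_support_iff.1 hq
  rw [fact_prod_pow I hI u q] at h1
  by_contra hc
  simp [hc] at h1

lemma NOmega (I : Finset ℕ) (hI : ∀ p ∈ I, p.Prime) (u : ℕ → ℕ) :
    Ω (∏ p ∈ I, p ^ u p) = ∑ p ∈ I, u p := by
  rw [Omega_prod I _ fun p hp => pow_ne_zero _ (hI p hp).pos.ne']
  exact Finset.sum_congr rfl fun p hp => cardFactors_apply_prime_pow (hI p hp)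

lemma Nnu (I : Finset ℕ) (hI : ∀ p ∈ I, p.Prime) (u : ℕ → ℕ) :
    nu (∏ p ∈ I, p ^ u p) = ∏ p ∈ I, (1 : ℝ) / (Nat.factorial (u p)) := by
  unfold nu
  rw [Finset.prod_subset (NprimeFactors I hI u)]
  · refine Finset.prod_congr rfl fun p hp => ?_
    rw [fact_prod_pow I hI u p, if_pos hp]
  · intro p hp hnp
    have : (∏ p ∈ I, p ^ u p).factorization p = 0 := by
      rw [← Nat.support_factorization] at hnp
      exact Finsupp.notMem_support_iff.1 hnp
    rw [this]
    simp

lemma Nrec (I : Finset ℕ) (n : ℕ) (hn : n ≠ 0) (hsub : n.primeFactors ⊆ I) :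
    (∏ p ∈ I, p ^ n.factorization p) = n := by
  rw [← Finset.prod_subset hsub (fun p _ hnp => by
    rw [← Nat.support_factorization] at hnp
    rw [Finsupp.notMem_support_iff.1 hnp, pow_zero])]
  conv_rhs => rw [← Nat.factorization_prod_pow_eq_self hn]
  rfl

lemma Omega_eq_sum (n : ℕ) (hn : n ≠ 0) :
    Ω n = ∑ p ∈ n.primeFactors, n.factorization p := by
  conv_lhs => rw [← Nat.factorization_prod_pow_eq_self hn]
  have : n.factorization.prod (· ^ ·) = ∏ p ∈ n.primeFactors, p ^ n.factorization p := rfl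
  rw [this, Omega_prod _ _ fun p hp =>
    pow_ne_zero _ (Nat.prime_of_mem_primeFactors hp).pos.ne']
  exact Finset.sum_congr rfl fun p hp =>
    cardFactors_apply_prime_pow (Nat.prime_of_mem_primeFactors hp)

lemma bound_dvd (I : Finset ℕ) (ℓ : ℕ) (n : ℕ) (hn : n ≠ 0)
    (hsub : n.primeFactors ⊆ I) (hΩ : Ω n ≤ ℓ) :
    n ∣ (∏ p ∈ I, p) ^ ℓ := by
  have hfe : ∀ p ∈ I, n.factorization p ≤ ℓ := by
    intro p hp
    calc n.factorization p ≤ ∑ q ∈ n.primeFactors, n.factorization q := by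
          by_cases h : p ∈ n.primeFactors
          · exact Finset.single_le_sum (fun q _ => Nat.zero_le _) h
          · rw [← Nat.support_factorization] at h
            rw [Finsupp.notMem_support_iff.1 h]
            exact Nat.zero_le _
      _ = Ω n := (Omega_eq_sum n hn).symm
      _ ≤ ℓ := hΩ
  calc n = ∏ p ∈ I, p ^ n.factorization p := (Nrec I n hn hsub).symm
    _ ∣ ∏ p ∈ I, p ^ ℓ := Finset.prod_dvd_prod_of_dvd _ _
        fun p hp => pow_dvd_pow p (hfe p hp)
    _ = (∏ p ∈ I, p) ^ ℓ := by rw [Finset.prod_pow]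

lemma multinomial_cast (I : Finset ℕ) (u : ℕ → ℕ) :
    (Nat.multinomial I u : ℂ)
      = ((∑ p ∈ I, u p).factorial : ℂ) * ∏ p ∈ I, (1 : ℂ) / (u p).factorial := by
  have hs := Nat.multinomial_spec I u
  have h2 : ((∏ p ∈ I, (u p).factorial : ℕ) : ℂ) * (Nat.multinomial I u : ℂ)
      = ((∑ p ∈ I, u p).factorial : ℂ) := by exact_mod_cast congrArg (Nat.cast : ℕ → ℂ) hs
  have hne : ((∏ p ∈ I, (u p).factorial : ℕ) : ℂ) ≠ 0 :=
    Nat.cast_ne_zero.2 (Finset.prod_ne_zero_iff.2 fun p _ => (Nat.factorial_pos _).ne')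
  have h3 : (Nat.multinomial I u : ℂ)
      = ((∑ p ∈ I, u p).factorial : ℂ) * (((∏ p ∈ I, (u p).factorial : ℕ) : ℂ))⁻¹ := by
    rw [← h2, Nat.cast_prod]
    have hne' : (∏ p ∈ I, ((u p).factorial : ℂ)) ≠ 0 :=
      Finset.prod_ne_zero_iff.2 fun p _ => Nat.cast_ne_zero.2 (Nat.factorial_pos _).ne'
    field_simp
  rw [h3]
  congr 1
  rw [Nat.cast_prod, ← Finset.prod_inv_distrib]
  exact Finset.prod_congr rfl fun p _ => (one_div _).symm

lemma powP (I : Finset ℕ) (hI : ∀ p ∈ I, p.Prime) (h : ℕ → ℂ) (h1 : h 1 = 1)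
    (hm : ∀ m n, h (m * n) = h m * h n) (r : ℕ) :
    (∑ p ∈ I, h p) ^ r = ∑ u ∈ I.piAntidiag r,
      (r.factorial : ℂ) * (nu (∏ p ∈ I, p ^ u p) : ℂ) * h (∏ p ∈ I, p ^ u p) := by
  classical
  rw [Finset.sum_pow_eq_sum_piAntidiag]
  refine Finset.sum_congr rfl fun u hu => ?_
  obtain ⟨hsum, hsupp⟩ := Finset.mem_piAntidiag.1 hu
  have hh : h (∏ p ∈ I, p ^ u p) = ∏ p ∈ I, h p ^ u p := by
    rw [cm_prod h h1 hm]
    exact Finset.prod_congr rfl fun p _ => cm_pow h h1 hm p (u p)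
  have hnu : (nu (∏ p ∈ I, p ^ u p) : ℂ) = ∏ p ∈ I, (1 : ℂ) / (u p).factorial := by
    rw [Nnu I hI u]
    push_cast
    rfl
  rw [hh, hnu, multinomial_cast, hsum]

noncomputable def gfun (a : ℕ → ℝ) (χ : ℕ → ℂ) (n : ℕ) : ℂ :=
  (a n : ℂ) * χ n / (Real.sqrt n : ℂ)

lemma gfun_one (a : ℕ → ℝ) (χ : ℕ → ℂ) (ha1 : a 1 = 1) (hχ1 : χ 1 = 1) :
    gfun a χ 1 = 1 := by simp [gfun, ha1, hχ1]

lemma gfun_mul (a : ℕ → ℝ) (χ : ℕ → ℂ) (hamul : ∀ m n : ℕ, a (m * n) = a m * a n)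
    (hχmul : ∀ m n : ℕ, χ (m * n) = χ m * χ n) (m n : ℕ) :
    gfun a χ (m * n) = gfun a χ m * gfun a χ n := by
  unfold gfun
  rw [hamul, hχmul]
  have hs : (Real.sqrt ((m * n : ℕ) : ℝ) : ℂ)
      = (Real.sqrt m : ℂ) * (Real.sqrt n : ℂ) := by
    rw [Nat.cast_mul, Real.sqrt_mul (Nat.cast_nonneg m), Complex.ofReal_mul]
  rw [hs]
  push_cast
  rw [div_mul_div_comm]
  ring_nf

noncomputable def Fq (a : ℕ → ℝ) (χ : ℕ → ℂ) (k : ℝ) (q : ℕ × ℕ) : ℂ :=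
  (k : ℂ) ^ (Ω q.1 + Ω q.2) * (nu q.1 : ℂ) * (nu q.2 : ℂ) *
    gfun a χ q.1 * gfun a (fun n => (starRingEnd ℂ) (χ n)) q.2

noncomputable def Dset (I : Finset ℕ) (ℓ : ℕ) : Finset (ℕ × ℕ) :=
  ((Finset.range ((∏ p ∈ I, p) ^ ℓ + 1)) ×ˢ (Finset.range ((∏ p ∈ I, p) ^ ℓ + 1))).filter
    (fun q => q.1 ≠ 0 ∧ q.2 ≠ 0 ∧ q.1.primeFactors ⊆ I ∧ q.2.primeFactors ⊆ I ∧
      Ω q.1 + Ω q.2 ≤ ℓ)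

noncomputable def Sset (I : Finset ℕ) (ℓ : ℕ) : Finset ℕ :=
  (Finset.range ((∏ p ∈ I, p) ^ ℓ + 1)).filter
    (fun n => 0 < n ∧ (∀ p : ℕ, p.Prime → p ∣ n → p ∈ I) ∧ Ω n ≤ ℓ)

noncomputable def Tset (ℓ : ℕ) : Finset (ℕ × ℕ) :=
  ((Finset.range (ℓ + 1)) ×ˢ (Finset.range (ℓ + 1))).filter (fun rs => rs.1 + rs.2 ≤ ℓ)

lemma mem_range_of_cond (I : Finset ℕ) (hI : ∀ p ∈ I, p.Prime) (ℓ n : ℕ) (hn : n ≠ 0)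
    (hsub : n.primeFactors ⊆ I) (hΩ : Ω n ≤ ℓ) :
    n ∈ Finset.range ((∏ p ∈ I, p) ^ ℓ + 1) := by
  rw [Finset.mem_range, Nat.lt_succ_iff]
  exact Nat.le_of_dvd (pow_pos (Finset.prod_pos fun p hp => (hI p hp).pos) ℓ)
    (bound_dvd I ℓ n hn hsub hΩ)

lemma term_eq (a : ℕ → ℝ) (hamul : ∀ m n : ℕ, a (m * n) = a m * a n)
    (χ : ℕ → ℂ) (k : ℝ) (n d e : ℕ) (hd : d ≠ 0) (he : e ≠ 0) (hde : d * e = n) :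
    ((k ^ (Ω n) * a n : ℝ) : ℂ) / (Real.sqrt n : ℂ) *
      ((nu d : ℂ) * χ d * (nu e : ℂ) * (starRingEnd ℂ) (χ e)) = Fq a χ k (d, e) := by
  subst hde
  have hΩ : Ω (d * e) = Ω d + Ω e := cardFactors_mul hd he
  have ha : ((a (d * e) : ℝ) : ℂ) = (a d : ℂ) * (a e : ℂ) := by
    rw [hamul]; push_cast; ring
  have hs : (Real.sqrt ((d * e : ℕ) : ℝ) : ℂ)
      = (Real.sqrt d : ℂ) * (Real.sqrt e : ℂ) := by
    rw [Nat.cast_mul, Real.sqrt_mul (Nat.cast_nonneg d), Complex.ofReal_mul]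
  unfold Fq gfun
  simp only [hΩ]
  push_cast [hamul] at *
  rw [hs]
  rw [div_eq_mul_inv, div_eq_mul_inv, div_eq_mul_inv, mul_inv]
  ring

lemma rhs_eq (I : Finset ℕ) (hI : ∀ p ∈ I, p.Prime)
    (a : ℕ → ℝ) (hamul : ∀ m n : ℕ, a (m * n) = a m * a n)
    (χ : ℕ → ℂ) (k : ℝ) (ℓ : ℕ) :
    (∑' n : ℕ, if 0 < n ∧ (∀ p : ℕ, p.Prime → p ∣ n → p ∈ I) ∧ Ω n ≤ ℓ then
          ((k ^ (Ω n) * a n : ℝ) : ℂ) / (Real.sqrt n : ℂ) *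
            ∑ d ∈ n.divisors, (nu d : ℂ) * χ d * (nu (n / d) : ℂ) *
              (starRingEnd ℂ) (χ (n / d))
        else 0)
      = ∑ q ∈ Dset I ℓ, Fq a χ k q := by
  classical
  have hsub : ∀ n : ℕ, n ≠ 0 → (∀ p : ℕ, p.Prime → p ∣ n → p ∈ I) →
      n.primeFactors ⊆ I := by
    intro n _ h p hp
    exact h p (Nat.prime_of_mem_primeFactors hp) (Nat.dvd_of_mem_primeFactors hp)
  rw [tsum_eq_sum (s := Sset I ℓ) ?_]
  · -- sum over Sset
    have hstep : ∀ n ∈ Sset I ℓ,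
        (if 0 < n ∧ (∀ p : ℕ, p.Prime → p ∣ n → p ∈ I) ∧ Ω n ≤ ℓ then
          ((k ^ (Ω n) * a n : ℝ) : ℂ) / (Real.sqrt n : ℂ) *
            ∑ d ∈ n.divisors, (nu d : ℂ) * χ d * (nu (n / d) : ℂ) *
              (starRingEnd ℂ) (χ (n / d))
        else 0) = ∑ q ∈ n.divisorsAntidiagonal, Fq a χ k q := by
      intro n hn
      rw [Sset, Finset.mem_filter] at hn
      rw [if_pos hn.2]
      rw [← Nat.sum_divisorsAntidiagonal
        (fun d e => (nu d : ℂ) * χ d * (nu e : ℂ) * (starRingEnd ℂ) (χ e))]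
      rw [Finset.mul_sum]
      refine Finset.sum_congr rfl fun q hq => ?_
      obtain ⟨hq1, hq2⟩ := Nat.mem_divisorsAntidiagonal.1 hq
      have hd : q.1 ≠ 0 := fun h0 => hq2 (by rw [← hq1, h0, zero_mul])
      have he : q.2 ≠ 0 := fun h0 => hq2 (by rw [← hq1, h0, mul_zero])
      rw [term_eq a hamul χ k n q.1 q.2 hd he hq1]
    rw [Finset.sum_congr rfl hstep]
    -- fiberwise
    rw [← Finset.sum_fiberwise_of_maps_to (g := fun q : ℕ × ℕ => q.1 * q.2)
      (t := Sset I ℓ) ?_ (Fq a χ k)]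
    · refine Finset.sum_congr rfl fun n hn => ?_
      rw [Sset, Finset.mem_filter] at hn
      refine Finset.sum_congr ?_ fun _ _ => rfl
      ext q
      simp only [Finset.mem_filter, Nat.mem_divisorsAntidiagonal, Dset, Finset.mem_product,
        Finset.mem_range]
      constructor
      · rintro ⟨h3, hne⟩
        have hd : q.1 ≠ 0 := fun h0 => hne (by rw [← h3, h0, zero_mul])
        have he : q.2 ≠ 0 := fun h0 => hne (by rw [← h3, h0, mul_zero])
        have hnI : n.primeFactors ⊆ I := hsub n hn.2.1.ne' hn.2.2.1
        have hd1 : q.1 ∣ n := ⟨q.2, h3.symm⟩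
        have he1 : q.2 ∣ n := ⟨q.1, by rw [← h3]; ring⟩
        have hΩn : Ω q.1 + Ω q.2 = Ω n := by
          rw [← h3]; exact (cardFactors_mul hd he).symm
        have hΩl : Ω q.1 + Ω q.2 ≤ ℓ := hΩn ▸ hn.2.2.2
        have hm1 := mem_range_of_cond I hI ℓ q.1 hd
          ((Nat.primeFactors_mono hd1 hne).trans hnI)
          (le_trans (Nat.le_add_right _ _) hΩl)
        have hm2 := mem_range_of_cond I hI ℓ q.2 he
          ((Nat.primeFactors_mono he1 hne).trans hnI)
          (le_trans (Nat.le_add_left _ _) hΩl)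
        rw [Finset.mem_range] at hm1 hm2
        exact ⟨⟨⟨hm1, hm2⟩, hd, he,
          (Nat.primeFactors_mono hd1 hne).trans hnI,
          (Nat.primeFactors_mono he1 hne).trans hnI, hΩl⟩, h3⟩
      · rintro ⟨-, h3⟩
        exact ⟨h3, hn.2.1.ne'⟩
    · -- maps to
      intro q hq
      rw [Dset, Finset.mem_filter] at hq
      obtain ⟨-, hd, he, hdI, heI, hΩ⟩ := hq
      have hne : q.1 * q.2 ≠ 0 := mul_ne_zero hd he
      have hsub2 : (q.1 * q.2).primeFactors ⊆ I := by
        rw [Nat.primeFactors_mul hd he]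
        exact Finset.union_subset hdI heI
      have hΩ2 : Ω (q.1 * q.2) ≤ ℓ := by rw [cardFactors_mul hd he]; exact hΩ
      rw [Sset, Finset.mem_filter]
      exact ⟨mem_range_of_cond I hI ℓ _ hne hsub2 hΩ2,
        Nat.pos_of_ne_zero hne,
        fun p hp hpd => hsub2 (Nat.mem_primeFactors.2 ⟨hp, hpd, hne⟩), hΩ2⟩
  · -- vanishing outside Sset
    intro n hn
    rw [if_neg]
    intro ⟨h1, h2, h3⟩
    exact hn (by
      rw [Sset, Finset.mem_filter]
      exact ⟨mem_range_of_cond I hI ℓ n h1.ne' (hsub n h1.ne' h2) h3, h1, h2, h3⟩)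

lemma fiber_sum (I : Finset ℕ) (hI : ∀ p ∈ I, p.Prime)
    (a : ℕ → ℝ) (χ : ℕ → ℂ) (k : ℝ) (ℓ r s : ℕ) (hrs : r + s ≤ ℓ) :
    ∑ u ∈ I.piAntidiag r, ∑ v ∈ I.piAntidiag s,
      ((k : ℂ) ^ (r + s) * (nu (∏ p ∈ I, p ^ u p) : ℂ) * (nu (∏ p ∈ I, p ^ v p) : ℂ) *
        gfun a χ (∏ p ∈ I, p ^ u p) *
        gfun a (fun n => (starRingEnd ℂ) (χ n)) (∏ p ∈ I, p ^ v p))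
      = ∑ q ∈ (Dset I ℓ).filter (fun q => (Ω q.1, Ω q.2) = (r, s)), Fq a χ k q := by
  classical
  rw [← Finset.sum_product']
  refine Finset.sum_nbij'
    (fun uv => (∏ p ∈ I, p ^ uv.1 p, ∏ p ∈ I, p ^ uv.2 p))
    (fun q => ((fun p => q.1.factorization p), (fun p => q.2.factorization p)))
    ?_ ?_ ?_ ?_ ?_
  · -- maps to fiber
    rintro ⟨u, v⟩ huv
    rw [Finset.mem_product] at huv
    obtain ⟨hu, hv⟩ := huv
    obtain ⟨hus, husupp⟩ := Finset.mem_piAntidiag.1 hu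
    obtain ⟨hvs, hvsupp⟩ := Finset.mem_piAntidiag.1 hv
    have hΩu : Ω (∏ p ∈ I, p ^ u p) = r := by rw [NOmega I hI u, hus]
    have hΩv : Ω (∏ p ∈ I, p ^ v p) = s := by rw [NOmega I hI v, hvs]
    rw [Finset.mem_filter, Dset, Finset.mem_filter, Finset.mem_product]
    refine ⟨⟨⟨?_, ?_⟩, Npos I hI u, Npos I hI v, NprimeFactors I hI u,
      NprimeFactors I hI v, by rw [hΩu, hΩv]; exact hrs⟩, by rw [hΩu, hΩv]⟩
    · exact mem_range_of_cond I hI ℓ _ (Npos I hI u) (NprimeFactors I hI u)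
        (by rw [hΩu]; exact le_trans (Nat.le_add_right _ _) hrs)
    · exact mem_range_of_cond I hI ℓ _ (Npos I hI v) (NprimeFactors I hI v)
        (by rw [hΩv]; exact le_trans (Nat.le_add_left _ _) hrs)
  · -- maps back
    rintro ⟨d, e⟩ hq
    rw [Finset.mem_filter, Dset, Finset.mem_filter] at hq
    obtain ⟨⟨-, hd, he, hdI, heI, -⟩, hΩ⟩ := hq
    have hΩ1 : Ω d = r := congrArg Prod.fst hΩ
    have hΩ2 : Ω e = s := congrArg Prod.snd hΩ
    rw [Finset.mem_product]
    constructor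
    · rw [Finset.mem_piAntidiag]
      refine ⟨?_, fun p hp => hdI (by
        rw [← Nat.support_factorization]
        exact Finsupp.mem_support_iff.2 hp)⟩
      rw [← hΩ1, Omega_eq_sum d hd]
      exact (Finset.sum_subset hdI (fun p _ hnp => by
        rw [← Nat.support_factorization] at hnp
        exact Finsupp.notMem_support_iff.1 hnp)).symm
    · rw [Finset.mem_piAntidiag]
      refine ⟨?_, fun p hp => heI (by
        rw [← Nat.support_factorization]
        exact Finsupp.mem_support_iff.2 hp)⟩
      rw [← hΩ2, Omega_eq_sum e he]
      exact (Finset.sum_subset heI (fun p _ hnp => by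
        rw [← Nat.support_factorization] at hnp
        exact Finsupp.notMem_support_iff.1 hnp)).symm
  · -- left inverse
    rintro ⟨u, v⟩ huv
    rw [Finset.mem_product] at huv
    obtain ⟨hu, hv⟩ := huv
    obtain ⟨-, husupp⟩ := Finset.mem_piAntidiag.1 hu
    obtain ⟨-, hvsupp⟩ := Finset.mem_piAntidiag.1 hv
    have h1 : (fun p => (∏ p ∈ I, p ^ u p).factorization p) = u := by
      funext q
      rw [fact_prod_pow I hI u q]
      by_cases h : q ∈ I
      · simp [h]
      · simp only [h, if_false]
        by_contra hne
        exact h (husupp q fun h0 => hne h0.symm)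
    have h2 : (fun p => (∏ p ∈ I, p ^ v p).factorization p) = v := by
      funext q
      rw [fact_prod_pow I hI v q]
      by_cases h : q ∈ I
      · simp [h]
      · simp only [h, if_false]
        by_contra hne
        exact h (hvsupp q fun h0 => hne h0.symm)
    simp only [Prod.mk.injEq]
    exact ⟨h1, h2⟩
  · -- right inverse
    rintro ⟨d, e⟩ hq
    rw [Finset.mem_filter, Dset, Finset.mem_filter] at hq
    obtain ⟨⟨-, hd, he, hdI, heI, -⟩, -⟩ := hq
    simp only [Prod.mk.injEq]
    exact ⟨Nrec I d hd hdI, Nrec I e he heI⟩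
  · -- values agree
    rintro ⟨u, v⟩ huv
    rw [Finset.mem_product] at huv
    obtain ⟨hu, hv⟩ := huv
    obtain ⟨hus, -⟩ := Finset.mem_piAntidiag.1 hu
    obtain ⟨hvs, -⟩ := Finset.mem_piAntidiag.1 hv
    have hΩu : Ω (∏ p ∈ I, p ^ u p) = r := by rw [NOmega I hI u, hus]
    have hΩv : Ω (∏ p ∈ I, p ^ v p) = s := by rw [NOmega I hI v, hvs]
    unfold Fq
    rw [hΩu, hΩv]

lemma lhs_eq (I : Finset ℕ) (hI : ∀ p ∈ I, p.Prime)
    (a : ℕ → ℝ) (ha1 : a 1 = 1) (hamul : ∀ m n : ℕ, a (m * n) = a m * a n)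
    (χ : ℕ → ℂ) (hχ1 : χ 1 = 1) (hχmul : ∀ m n : ℕ, χ (m * n) = χ m * χ n)
    (k : ℝ) (ℓ : ℕ) :
    ((∑ j ∈ Finset.range (ℓ + 1),
        (2 * k * (∑ p ∈ I, (a p : ℂ) * χ p / (Real.sqrt p : ℂ)).re) ^ j /
          (Nat.factorial j) : ℝ) : ℂ)
      = ∑ q ∈ Dset I ℓ, Fq a χ k q := by
  classical
  set χb : ℕ → ℂ := fun n => (starRingEnd ℂ) (χ n) with hχb
  have hχb1 : χb 1 = 1 := by rw [hχb]; simp [hχ1]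
  have hχbmul : ∀ m n : ℕ, χb (m * n) = χb m * χb n := by
    intro m n; rw [hχb]; simp [hχmul]
  set P : ℂ := ∑ p ∈ I, gfun a χ p with hP
  set Q : ℂ := ∑ p ∈ I, gfun a χb p with hQ
  have hPdef : (∑ p ∈ I, (a p : ℂ) * χ p / (Real.sqrt p : ℂ)) = P := rfl
  have hconjP : (starRingEnd ℂ) P = Q := by
    rw [hP, hQ, map_sum]
    refine Finset.sum_congr rfl fun p _ => ?_
    unfold gfun
    rw [map_div₀, map_mul, Complex.conj_ofReal, Complex.conj_ofReal]
  have hcast : ((∑ j ∈ Finset.range (ℓ + 1),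
      (2 * k * P.re) ^ j / (Nat.factorial j) : ℝ) : ℂ)
      = ∑ j ∈ Finset.range (ℓ + 1), ((k : ℂ) * (P + Q)) ^ j / (Nat.factorial j) := by
    push_cast
    refine Finset.sum_congr rfl fun j _ => ?_
    congr 2
    have h2 : P + Q = ((2 * P.re : ℝ) : ℂ) := by rw [← hconjP]; exact Complex.add_conj P
    rw [h2]
    push_cast
    ring
  rw [hPdef, hcast]
  have hbin : ∀ j : ℕ, ((k : ℂ) * (P + Q)) ^ j / (Nat.factorial j)
      = ∑ m ∈ Finset.HasAntidiagonal.antidiagonal j,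
          (k : ℂ) ^ (m.1 + m.2) * (1 / (Nat.factorial m.1)) * (1 / (Nat.factorial m.2)) *
            P ^ m.1 * Q ^ m.2 := by
    intro j
    rw [mul_pow, (Commute.all P Q).add_pow' j, Finset.mul_sum, Finset.sum_div]
    refine Finset.sum_congr rfl fun m hm => ?_
    have hmj : m.1 + m.2 = j := Finset.HasAntidiagonal.mem_antidiagonal.1 hm
    have hle : m.1 ≤ j := hmj ▸ Nat.le_add_right _ _
    have h1 : ((Nat.factorial m.1 : ℂ)) ≠ 0 := Nat.cast_ne_zero.2 (Nat.factorial_pos _).ne'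
    have h2 : ((Nat.factorial m.2 : ℂ)) ≠ 0 := Nat.cast_ne_zero.2 (Nat.factorial_pos _).ne'
    have h3 : ((Nat.factorial j : ℂ)) ≠ 0 := Nat.cast_ne_zero.2 (Nat.factorial_pos _).ne'
    have hkey : (j.choose m.1 : ℂ) / (Nat.factorial j : ℂ)
        = (1 / (Nat.factorial m.1)) * (1 / (Nat.factorial m.2)) := by
      have hspec : (j.choose m.1) * (Nat.factorial m.1) * (Nat.factorial (j - m.1))
          = Nat.factorial j := Nat.choose_mul_factorial_mul_factorial hle
      have hj2 : j - m.1 = m.2 := by omega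
      rw [hj2] at hspec
      have hc : ((j.choose m.1 : ℂ)) * (Nat.factorial m.1) * (Nat.factorial m.2)
          = (Nat.factorial j) := by exact_mod_cast hspec
      field_simp
      linear_combination hc
    rw [nsmul_eq_mul, hmj]
    calc (k : ℂ) ^ j * ((j.choose m.1 : ℂ) * (P ^ m.1 * Q ^ m.2)) / (Nat.factorial j)
        = ((j.choose m.1 : ℂ) / (Nat.factorial j)) * ((k : ℂ) ^ j * P ^ m.1 * Q ^ m.2) := by
          ring
      _ = _ := by rw [hkey]; ring
  rw [Finset.sum_congr rfl fun j _ => hbin j]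
  -- fiberwise over j
  have hmaps : ∀ m ∈ Tset ℓ, m.1 + m.2 ∈ Finset.range (ℓ + 1) := by
    intro m hm
    rw [Tset, Finset.mem_filter] at hm
    rw [Finset.mem_range]
    omega
  have hfib : ∀ j ∈ Finset.range (ℓ + 1),
      Finset.HasAntidiagonal.antidiagonal j = (Tset ℓ).filter (fun m => m.1 + m.2 = j) := by
    intro j hj
    rw [Finset.mem_range] at hj
    ext m
    rw [Finset.HasAntidiagonal.mem_antidiagonal, Finset.mem_filter, Tset, Finset.mem_filter,
      Finset.mem_product, Finset.mem_range, Finset.mem_range]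
    constructor
    · intro h; exact ⟨⟨⟨by omega, by omega⟩, by omega⟩, h⟩
    · rintro ⟨-, h⟩; exact h
  rw [Finset.sum_congr rfl fun j hj => by rw [hfib j hj]]
  rw [Finset.sum_fiberwise_of_maps_to hmaps]
  -- fiberwise over (Ω, Ω) on the Dset side
  have hmaps2 : ∀ q ∈ Dset I ℓ, (Ω q.1, Ω q.2) ∈ Tset ℓ := by
    intro q hq
    rw [Dset, Finset.mem_filter] at hq
    rw [Tset, Finset.mem_filter, Finset.mem_product, Finset.mem_range, Finset.mem_range]
    obtain ⟨-, -, -, -, -, h⟩ := hq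
    exact ⟨⟨by omega, by omega⟩, h⟩
  rw [← Finset.sum_fiberwise_of_maps_to hmaps2 (Fq a χ k)]
  refine Finset.sum_congr rfl fun m hm => ?_
  have hml : m.1 + m.2 ≤ ℓ := by
    rw [Tset, Finset.mem_filter] at hm; exact hm.2
  obtain ⟨m1, m2⟩ := m
  simp only at hml ⊢
  rw [hP, hQ, powP I hI (gfun a χ) (gfun_one a χ ha1 hχ1) (gfun_mul a χ hamul hχmul) m1,
    powP I hI (gfun a χb) (gfun_one a χb ha1 hχb1) (gfun_mul a χb hamul hχbmul) m2]
  rw [← fiber_sum I hI a χ k ℓ m1 m2 hml]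
  simp only [Finset.mul_sum, Finset.sum_mul]
  rw [Finset.sum_comm]
  refine Finset.sum_congr rfl fun u hu => ?_
  refine Finset.sum_congr rfl fun v hv => ?_
  have hfu : ((Nat.factorial m1 : ℂ)) ≠ 0 := Nat.cast_ne_zero.2 (Nat.factorial_pos _).ne'
  have hfv : ((Nat.factorial m2 : ℂ)) ≠ 0 := Nat.cast_ne_zero.2 (Nat.factorial_pos _).ne'
  field_simp
  ring

/-- For a finite set `I` of primes, a real-valued completely multiplicative `a`,
a completely multiplicative `χ` with unit-circle values, and any nonzero real `k`
and even positive integer `ℓ`: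
`E_ℓ(2k Re P_I(χ;a)) = ∑_{p|n⇒p∈I, Ω(n)≤ℓ} k^{Ω(n)} a(n)/√n ⬝ (νχ ∗ ν conj χ)(n)`. -/
theorem stmt9 (I : Finset ℕ) (hI : ∀ p ∈ I, p.Prime)
    (a : ℕ → ℝ) (ha1 : a 1 = 1) (hamul : ∀ m n : ℕ, a (m * n) = a m * a n)
    (χ : ℕ → ℂ) (hχ1 : χ 1 = 1) (hχmul : ∀ m n : ℕ, χ (m * n) = χ m * χ n)
    (hχunit : ∀ n : ℕ, n ≠ 0 → ‖χ n‖ = 1)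
    (k : ℝ) (hk : k ≠ 0) (ℓ : ℕ) (hℓ : 0 < ℓ) (hev : Even ℓ) :
    ((∑ j ∈ Finset.range (ℓ + 1),
        (2 * k * (∑ p ∈ I, (a p : ℂ) * χ p / (Real.sqrt p : ℂ)).re) ^ j /
          (Nat.factorial j) : ℝ) : ℂ)
      = ∑' n : ℕ, if 0 < n ∧ (∀ p : ℕ, p.Prime → p ∣ n → p ∈ I) ∧ Ω n ≤ ℓ then
          ((k ^ (Ω n) * a n : ℝ) : ℂ) / (Real.sqrt n : ℂ) *
            ∑ d ∈ n.divisors, (nu d : ℂ) * χ d * (nu (n / d) : ℂ) *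
              (starRingEnd ℂ) (χ (n / d))
        else 0 := by
  rw [lhs_eq I hI a ha1 hamul χ hχ1 hχmul k ℓ]
  exact (rhs_eq I hI a hamul χ k ℓ).symm
end
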